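/- Answer sets are incomparable: if M1 and M2 are both answer sets of a normal logic program P and M1 ⊆ M2, then M1 = M2. -/
import Mathlib


structure NRule (α : Type) where
  head : α
  pos : Finset α
  neg : Finset α

def satRule {α : Type} (M : Set α) (r : NRule α) : Prop :=
  ↑r.pos ⊆ M → (↑r.neg ∩ M : Set α) = ∅ → r.head ∈ M

def isModel {α : Type} (M : Set α) (P : Set (NRule α)) : Prop :=
  ∀ r ∈ P, satRule M r

def reduct {α : Type} (P : Set (NRule α)) (M : Set α) : Set (NRule α) :=
  (fun r => ⟨r.head, r.pos, ∅⟩) '' {r ∈ P | (↑r.neg ∩ M : Set α) = ∅}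

def isMinModel {α : Type} (M : Set α) (P : Set (NRule α)) : Prop :=
  isModel M P ∧ ∀ M' ⊆ M, isModel M' P → M' = M

def isAnswerSet {α : Type} (M : Set α) (P : Set (NRule α)) : Prop :=
  isMinModel M (reduct P M)

def isSupported {α : Type} (M : Set α) (P : Set (NRule α)) : Prop :=
  isModel M P ∧ ∀ a ∈ M, ∃ r ∈ P, r.head = a ∧ ↑r.pos ⊆ M ∧ (↑r.neg ∩ M : Set α) = ∅

def isDefinite {α : Type} (P : Set (NRule α)) : Prop :=
  ∀ r ∈ P, r.neg = ∅

def isLocallyStratified {α : Type} (P : Set (NRule α)) : Prop :=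
  ∃ l : α → ℕ, ∀ r ∈ P, (∀ b ∈ r.pos, l b ≤ l r.head) ∧ (∀ c ∈ r.neg, l c < l r.head)

def hasLevelRanking {α : Type} (M : Set α) (P : Set (NRule α)) : Prop :=
  ∃ lr : α → ℕ, ∀ a ∈ M, ∃ r ∈ P, r.head = a ∧ ↑r.pos ⊆ M ∧ (↑r.neg ∩ M : Set α) = ∅ ∧
    ∀ b ∈ r.pos, lr b + 1 ≤ lr a

theorem stmt_4 {α : Type} (P : Set (NRule α)) (M1 M2 : Set α)
    (h1 : isAnswerSet M1 P) (h2 : isAnswerSet M2 P) (hsub : M1 ⊆ M2) :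
    M1 = M2 := by
  apply h2.2 M1 hsub
  intro r hr
  obtain ⟨s, ⟨hsP, hs2⟩, rfl⟩ := hr
  have hs1 : (↑s.neg ∩ M1 : Set α) = ∅ := by
    apply Set.eq_empty_of_subset_empty
    rw [← hs2]
    exact Set.inter_subset_inter_right _ hsub
  exact h1.1 _ ⟨s, ⟨hsP, hs1⟩, rfl⟩
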